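/- If X ≤_icx Y for integrable random variables X, Y, then there exists a random variable Z (possibly on an enlarged probability space) with X ≤_st Z and Z ≤_cx Y. -/

import Mathlib

open MeasureTheory ProbabilityTheory Set

noncomputable section

variable {Ω Ω' : Type*} [MeasurableSpace Ω] [MeasurableSpace Ω']

/-- Distribution function of a random variable. -/
def distFun (μ : Measure Ω) (X : Ω → ℝ) (x : ℝ) : ℝ := (μ {ω | X ω ≤ x}).toReal

/-- Value-at-Risk at level α: `VaR_α(X) = inf {x | F_X(x) ≥ 1-α}`. -/
def VaR (μ : Measure Ω) (X : Ω → ℝ) (α : ℝ) : ℝ := sInf {x | 1 - α ≤ distFun μ X x}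

/-- Range-Value-at-Risk with parameters α, β (for β > 0). -/
def RVaR (μ : Measure Ω) (X : Ω → ℝ) (α β : ℝ) : ℝ := (1/β) * ∫ s in α..(α+β), VaR μ X s

/-- Usual stochastic order. -/
def le_st (μ : Measure Ω) (X : Ω → ℝ) (ν : Measure Ω') (Y : Ω' → ℝ) : Prop :=
  ∀ f : ℝ → ℝ, Monotone f → Integrable (fun ω => f (X ω)) μ →
    Integrable (fun ω => f (Y ω)) ν → ∫ ω, f (X ω) ∂μ ≤ ∫ ω, f (Y ω) ∂ν

/-- Convex order. -/
def le_cx (μ : Measure Ω) (X : Ω → ℝ) (ν : Measure Ω') (Y : Ω' → ℝ) : Prop :=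
  ∀ f : ℝ → ℝ, ConvexOn ℝ univ f → Integrable (fun ω => f (X ω)) μ →
    Integrable (fun ω => f (Y ω)) ν → ∫ ω, f (X ω) ∂μ ≤ ∫ ω, f (Y ω) ∂ν

/-- Increasing convex order. -/
def le_icx (μ : Measure Ω) (X : Ω → ℝ) (ν : Measure Ω') (Y : Ω' → ℝ) : Prop :=
  ∀ f : ℝ → ℝ, Monotone f → ConvexOn ℝ univ f → Integrable (fun ω => f (X ω)) μ →
    Integrable (fun ω => f (Y ω)) ν → ∫ ω, f (X ω) ∂μ ≤ ∫ ω, f (Y ω) ∂ν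

/-- Admissible ceded loss functions: `0 ≤ f(x) ≤ x` with both `f` and the
retained loss `x - f(x)` increasing. -/
def Ceded (f : ℝ → ℝ) : Prop :=
  Monotone f ∧ Monotone (fun x => x - f x) ∧ ∀ x, 0 ≤ x → 0 ≤ f x ∧ f x ≤ x

/-- Layer reinsurance treaty with deductible `a` and upper bound `b`. -/
def layer (a b x : ℝ) : ℝ := min (max (x - a) 0) b

/-- Joint distribution function of a random vector. -/
def jointCDF {n : ℕ} (μ : Measure Ω) (X : Fin n → Ω → ℝ) (x : Fin n → ℝ) : ℝ :=
  (μ {ω | ∀ i, X i ω ≤ x i}).toReal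

/-- All one-dimensional marginals are uniform on [0,1]. -/
def uniformMarginals {n : ℕ} (ν : Measure (Fin n → ℝ)) : Prop :=
  ∀ i, Measure.map (fun u => u i) ν = volume.restrict (Icc (0:ℝ) 1)

/-- `C` is (the distribution function of) an `n`-dimensional copula. -/
def IsCopula {n : ℕ} (C : (Fin n → ℝ) → ℝ) : Prop :=
  ∃ ν : Measure (Fin n → ℝ), IsProbabilityMeasure ν ∧ uniformMarginals ν ∧
    ∀ x, C x = (ν {u | ∀ i, u i ≤ x i}).toReal

/-- `C` is a copula of the random vector `X`. -/
def HasCopula {n : ℕ} (μ : Measure Ω) (X : Fin n → Ω → ℝ) (C : (Fin n → ℝ) → ℝ) : Prop :=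
  IsCopula C ∧ ∀ x : Fin n → ℝ, jointCDF μ X x = C (fun i => distFun μ (X i) (x i))

/-- Positively dependent through the stochastic ordering: for each `i`,
`E[f(X_{-i}) | X_i = x]` is increasing in `x` for every componentwise increasing `f`
(not depending on coordinate `i`). -/
def PDS {n : ℕ} (μ : Measure Ω) (X : Fin n → Ω → ℝ) : Prop :=
  ∀ i : Fin n, ∀ f : (Fin n → ℝ) → ℝ, Monotone f →
    (∀ a b : Fin n → ℝ, (∀ j, j ≠ i → a j = b j) → f a = f b) →
    ∃ g : ℝ → ℝ, Monotone g ∧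
      (μ[(fun ω => f (fun j => X j ω)) | MeasurableSpace.comap (X i) (borel ℝ)]
        =ᵐ[μ] fun ω => g (X i ω))

/-- `C` is a PDS copula. -/
def IsPDSCopula {n : ℕ} (C : (Fin n → ℝ) → ℝ) : Prop :=
  ∃ ν : Measure (Fin n → ℝ), IsProbabilityMeasure ν ∧ uniformMarginals ν ∧
    (∀ x, C x = (ν {u | ∀ i, u i ≤ x i}).toReal) ∧ PDS ν (fun i u => u i)

/-- Positive orthant dependence. -/
def POD {n : ℕ} (μ : Measure Ω) (X : Fin n → Ω → ℝ) : Prop :=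
  ∀ x : Fin n → ℝ,
    (∏ i, (μ {ω | X i ω ≤ x i}).toReal) ≤ (μ {ω | ∀ i, X i ω ≤ x i}).toReal ∧
    (∏ i, (μ {ω | x i < X i ω}).toReal) ≤ (μ {ω | ∀ i, x i < X i ω}).toReal

/-- A comonotone random vector. -/
def Comonotone {m : ℕ} (Z : Fin m → Ω → ℝ) : Prop :=
  ∀ i j ω ω', 0 ≤ (Z i ω - Z i ω') * (Z j ω - Z j ω')

open Filter

/-- Every convex function on `ℝ` has a subgradient at every point. -/
lemma exists_support_line (f : ℝ → ℝ) (hf : ConvexOn ℝ (univ : Set ℝ) f) (t : ℝ) :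
    ∃ s : ℝ, ∀ x, f t + s * (x - t) ≤ f x := by
  set S : Set ℝ := (fun y => (f y - f t) / (y - t)) '' Ioi t with hS
  have hne : S.Nonempty := ⟨_, ⟨t + 1, by simp, rfl⟩⟩
  have hbd : BddBelow S := by
    refine ⟨(f t - f (t - 1)) / (t - (t - 1)), ?_⟩
    rintro z ⟨y, hy, rfl⟩
    exact hf.slope_mono_adjacent (mem_univ _) (mem_univ _) (by linarith) hy
  set s := sInf S with hs
  refine ⟨s, fun x => ?_⟩
  rcases lt_trichotomy x t with hx | rfl | hx
  · have h1 : ∀ z ∈ S, (f t - f x) / (t - x) ≤ z := by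
      rintro z ⟨y, hy, rfl⟩
      exact hf.slope_mono_adjacent (mem_univ _) (mem_univ _) hx hy
    have h2 : (f t - f x) / (t - x) ≤ s := le_csInf hne h1
    have htx : (0:ℝ) < t - x := by linarith
    rw [div_le_iff₀ htx] at h2
    nlinarith
  · simp
  · have h2 : s ≤ (f x - f t) / (x - t) := csInf_le hbd ⟨x, hx, rfl⟩
    have htx : (0:ℝ) < x - t := by linarith
    rw [le_div_iff₀ htx] at h2
    linarith

lemma key_ineq (μ : Measure Ω) (ν : Measure Ω')
    [IsProbabilityMeasure μ] [IsProbabilityMeasure ν]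
    (X : Ω → ℝ) (Y : Ω' → ℝ) (hXm : Measurable X) (hYm : Measurable Y)
    (hX : Integrable X μ) (hY : Integrable Y ν)
    (h : le_icx μ X ν Y) (f : ℝ → ℝ) (hf : ConvexOn ℝ univ f)
    (t s : ℝ) (hs : ∀ x, f t + s * (x - t) ≤ f x)
    (hfZ : Integrable (fun ω => f (max (X ω) t)) μ)
    (hfY : Integrable (fun ω => f (Y ω)) ν) :
    ∫ ω, f (max (X ω) t) ∂μ ≤
      ∫ ω, f (Y ω) ∂ν + s * ((∫ ω, max (X ω) t ∂μ) - ∫ ω, Y ω ∂ν) := by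
  have hcont : Continuous f := by
    rw [← continuousOn_univ]
    exact hf.continuousOn isOpen_univ
  set m : ℝ → ℝ := fun x => f (max x t) - s * max x t with hm
  -- h' is f minus the linear part, monotone on [t,∞)
  set h' : ℝ → ℝ := fun y => f y - s * y with hh'
  have hmonoOn : MonotoneOn h' (Ici t) := by
    rintro y1 (hy1 : t ≤ y1) y2 (hy2 : t ≤ y2) hle
    rcases eq_or_lt_of_le hle with rfl | hlt
    · exact le_rfl
    simp only [hh']
    rcases eq_or_lt_of_le hy1 with rfl | hty1
    · have := hs y2; nlinarith
    · have hsl := hf.slope_mono_adjacent (mem_univ t) (mem_univ y2) hty1 hlt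
      have h1 : s * (y1 - t) ≤ f y1 - f t := by have := hs y1; linarith
      have h2 : s ≤ (f y1 - f t) / (y1 - t) := by
        rw [le_div_iff₀ (by linarith)]; linarith
      have h3 : s ≤ (f y2 - f y1) / (y2 - y1) := le_trans h2 hsl
      rw [le_div_iff₀ (by linarith)] at h3
      nlinarith
  have hmono : Monotone m := by
    intro a b hab
    have h1 : max a t ≤ max b t := max_le_max hab le_rfl
    exact hmonoOn (le_max_right a t) (le_max_right b t) h1
  have hmaxconv : ConvexOn ℝ (univ : Set ℝ) (fun x => max x t) := by
    refine ⟨convex_univ, fun x _ y _ a b ha hb hab => ?_⟩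
    simp only [smul_eq_mul]
    apply max_le
    · nlinarith [mul_le_mul_of_nonneg_left (le_max_left x t) ha,
        mul_le_mul_of_nonneg_left (le_max_left y t) hb]
    · have h1 : a * t + b * t = t := by rw [← add_mul, hab, one_mul]
      linarith [mul_le_mul_of_nonneg_left (le_max_right x t) ha,
        mul_le_mul_of_nonneg_left (le_max_right y t) hb]
  have himg : (fun x => max x t) '' univ = Ici t := by
    ext y
    simp only [image_univ, mem_range, mem_Ici]
    constructor
    · rintro ⟨x, rfl⟩; exact le_max_right x t
    · intro hy; exact ⟨y, max_eq_left hy⟩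
  have hh'conv : ConvexOn ℝ (Ici t) h' := by
    refine ⟨convex_Ici t, fun x _ y _ a b ha hb hab => ?_⟩
    have := hf.2 (mem_univ x) (mem_univ y) ha hb hab
    simp only [smul_eq_mul, hh'] at this ⊢
    nlinarith
  have hconv : ConvexOn ℝ (univ : Set ℝ) m := by
    have := ConvexOn.comp (g := h') (f := fun x => max x t) (s := univ)
      (by rw [himg]; exact hh'conv) hmaxconv (by rw [himg]; exact hmonoOn)
    exact this
  -- integrability
  have hZmeas : Measurable fun ω => max (X ω) t := hXm.max measurable_const
  have hZint : Integrable (fun ω => max (X ω) t) μ := hX.sup (integrable_const t)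
  have hmX : Integrable (fun ω => m (X ω)) μ := by
    simpa [hm, Pi.sub_def] using hfZ.sub (hZint.const_mul s)
  have hYmax : Integrable (fun ω => max (Y ω) t) ν := hY.sup (integrable_const t)
  have hfYmax : Integrable (fun ω => f (max (Y ω) t)) ν := by
    refine Integrable.mono' (hfY.abs.add (integrable_const |f t|))
      ((hcont.measurable.comp (hYm.max measurable_const)).aestronglyMeasurable) ?_
    filter_upwards with ω
    simp only [Pi.add_apply, Real.norm_eq_abs]
    rcases le_total t (Y ω) with hle | hle
    · rw [max_eq_left hle]
      linarith [abs_nonneg (f t)]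
    · rw [max_eq_right hle]
      linarith [abs_nonneg (f (Y ω))]
  have hmY : Integrable (fun ω => m (Y ω)) ν := by
    simpa [hm, Pi.sub_def] using hfYmax.sub (hYmax.const_mul s)
  -- the icx comparison
  have hcomp : ∫ ω, m (X ω) ∂μ ≤ ∫ ω, m (Y ω) ∂ν := h m hmono hconv hmX hmY
  -- ∫ f(max(X,t)) = ∫ m(X) + s * ∫ max(X,t)
  have e1 : ∫ ω, f (max (X ω) t) ∂μ
      = (∫ ω, m (X ω) ∂μ) + s * ∫ ω, max (X ω) t ∂μ := by
    rw [← integral_const_mul, ← integral_add hmX (hZint.const_mul s)]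
    congr 1; funext ω; simp [hm]
  -- ∫ m(Y) + s * ∫ Y ≤ ∫ f(Y)
  have e2 : (∫ ω, m (Y ω) ∂ν) + s * ∫ ω, Y ω ∂ν ≤ ∫ ω, f (Y ω) ∂ν := by
    rw [← integral_const_mul, ← integral_add hmY (hY.const_mul s)]
    refine integral_mono (hmY.add (hY.const_mul s)) hfY fun ω => ?_
    simp only [hm]
    rcases le_total t (Y ω) with hle | hle
    · rw [max_eq_left hle]; linarith
    · rw [max_eq_right hle]
      have := hs (Y ω); nlinarith
  linarith

/-- `|max x (-n)| ≤ |x|` for `n : ℕ`. -/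
lemma abs_max_neg_le (x : ℝ) (n : ℕ) : |max x (-(n:ℝ))| ≤ |x| := by
  rcases le_total (-(n:ℝ)) x with hle | hle
  · rw [max_eq_left hle]
  · rw [max_eq_right hle]
    rw [abs_of_nonpos (neg_nonpos.mpr (Nat.cast_nonneg n)), neg_neg]
    calc (n:ℝ) ≤ -x := by linarith
    _ ≤ |x| := neg_le_abs x

/-- integrability of `f (max (X ·) t)` from that of `f (X ·)`. -/
lemma integrable_f_max {μ : Measure Ω} [IsProbabilityMeasure μ]
    {X : Ω → ℝ} (hXm : Measurable X) {f : ℝ → ℝ} (hcont : Continuous f)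
    (hfX : Integrable (fun ω => f (X ω)) μ) (t : ℝ) :
    Integrable (fun ω => f (max (X ω) t)) μ := by
  refine Integrable.mono' (hfX.abs.add (integrable_const |f t|))
    ((hcont.measurable.comp (hXm.max measurable_const)).aestronglyMeasurable) ?_
  filter_upwards with ω
  simp only [Pi.add_apply, Real.norm_eq_abs]
  rcases le_total t (X ω) with hle | hle
  · rw [max_eq_left hle]; linarith [abs_nonneg (f t)]
  · rw [max_eq_right hle]; linarith [abs_nonneg (f (X ω))]

/-- `X ≤_icx Y` implies existence of `Z` with `X ≤_st Z ≤_cx Y`. -/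
theorem le_icx_iff_st_cx_decomposition
    (μ : Measure Ω) (ν : Measure Ω') [IsProbabilityMeasure μ] [IsProbabilityMeasure ν]
    (X : Ω → ℝ) (Y : Ω' → ℝ) (hXm : Measurable X) (hYm : Measurable Y)
    (hX : Integrable X μ) (hY : Integrable Y ν)
    (h : le_icx μ X ν Y) :
    ∃ (Ω'' : Type) (_ : MeasurableSpace Ω'') (P : Measure Ω'') (Z : Ω'' → ℝ),
      IsProbabilityMeasure P ∧ Measurable Z ∧ Integrable Z P ∧
      le_st μ X P Z ∧ le_cx P Z ν Y := by
  classical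
  have hEX : ∫ ω, X ω ∂μ ≤ ∫ ω, Y ω ∂ν := by
    have := h id monotone_id (convexOn_id convex_univ) hX hY
    simpa using this
  rcases eq_or_lt_of_le hEX with hEq | hLt
  · -- equal means : take Z = X
    refine ⟨ℝ, inferInstance, μ.map X, id, Measure.isProbabilityMeasure_map hXm.aemeasurable,
      measurable_id, ?_, ?_, ?_⟩
    · exact (integrable_map_measure aestronglyMeasurable_id hXm.aemeasurable).mpr hX
    · intro f hf h1 h2
      rw [integral_map hXm.aemeasurable h2.aestronglyMeasurable]
      exact le_rfl
    · intro f hfc hfXP hfY2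
      have hfX : Integrable (fun ω => f (X ω)) μ := by
        simpa [Function.comp_def] using
          (integrable_map_measure hfXP.aestronglyMeasurable hXm.aemeasurable).mp hfXP
      rw [integral_map hXm.aemeasurable hfXP.aestronglyMeasurable]
      simp only [id_eq]
      by_cases hm : Monotone f
      · exact h f hm hfc hfX hfY2
      · have hcont : Continuous f := by
          rw [← continuousOn_univ]; exact hfc.continuousOn isOpen_univ
        simp only [Monotone, not_forall] at hm
        obtain ⟨a, b, hab, hba⟩ := hm
        rw [not_le] at hba
        have haltb : a < b := by
          rcases hab.lt_or_eq with h' | rfl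
          · exact h'
          · exact absurd hba (lt_irrefl _)
        -- dominated convergence setup
        obtain ⟨s₀, hs₀⟩ := exists_support_line f hfc 0
        set G : Ω → ℝ := fun ω => |f (X ω)| + |f 0| + |s₀| * |X ω| with hG
        have hGint : Integrable G μ :=
          (hfX.abs.add (integrable_const _)).add (hX.abs.const_mul |s₀|)
        set F : ℕ → Ω → ℝ := fun n ω => f (max (X ω) (-(n:ℝ))) with hF
        have hFmeas : ∀ n, AEStronglyMeasurable (F n) μ := fun n =>
          ((hcont.measurable.comp (hXm.max measurable_const)).aestronglyMeasurable)
        have hFbound : ∀ n, ∀ᵐ ω ∂μ, ‖F n ω‖ ≤ G ω := by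
          intro n
          filter_upwards with ω
          simp only [hF, hG, Real.norm_eq_abs]
          rw [abs_le]
          constructor
          · -- lower bound from support line at 0
            have h1 := hs₀ (max (X ω) (-(n:ℝ)))
            have h2 : |max (X ω) (-(n:ℝ))| ≤ |X ω| := abs_max_neg_le _ _
            have h3 : s₀ * (max (X ω) (-(n:ℝ)) - 0) ≥ -(|s₀| * |X ω|) := by
              have : |s₀ * (max (X ω) (-(n:ℝ)) - 0)| ≤ |s₀| * |X ω| := by
                rw [abs_mul]
                apply mul_le_mul_of_nonneg_left _ (abs_nonneg s₀)
                simpa using h2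
              linarith [neg_abs_le (s₀ * (max (X ω) (-(n:ℝ)) - 0))]
            have h4 : -(|f 0|) ≤ f 0 := neg_abs_le _
            nlinarith [abs_nonneg (f (X ω)), neg_abs_le (f (X ω))]
          · -- upper bound : f(max) ≤ max (f x) (f 0)
            rcases le_total (-(n:ℝ)) (X ω) with hle | hle
            · rw [max_eq_left hle]
              nlinarith [abs_nonneg (f 0), abs_nonneg s₀, abs_nonneg (X ω),
                le_abs_self (f (X ω)), mul_nonneg (abs_nonneg s₀) (abs_nonneg (X ω))]
            · rw [max_eq_right hle]
              have hn0 : -(n:ℝ) ≤ 0 := neg_nonpos.mpr (Nat.cast_nonneg n)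
              have hseg : -(n:ℝ) ∈ segment ℝ (X ω) (0:ℝ) := by
                rw [segment_eq_Icc (le_trans hle hn0)]
                exact ⟨hle, hn0⟩
              have := hfc.le_on_segment (mem_univ (X ω)) (mem_univ (0:ℝ)) hseg
              have hb1 : f (X ω) ≤ |f (X ω)| := le_abs_self _
              have hb2 : f 0 ≤ |f 0| := le_abs_self _
              have hmax : max (f (X ω)) (f 0) ≤ |f (X ω)| + |f 0| := by
                apply max_le <;> [linarith [abs_nonneg (f 0)]; linarith [abs_nonneg (f (X ω))]]
              nlinarith [mul_nonneg (abs_nonneg s₀) (abs_nonneg (X ω))]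
        have hFlim : ∀ᵐ ω ∂μ, Tendsto (fun n => F n ω) atTop (nhds (f (X ω))) := by
          filter_upwards with ω
          apply tendsto_atTop_of_eventually_const (i₀ := ⌈-X ω⌉₊)
          intro i hi
          have h1 : -X ω ≤ (i:ℝ) := le_trans (Nat.le_ceil _) (Nat.cast_le.mpr hi)
          simp only [hF]
          rw [max_eq_left (by linarith)]
        have hTend : Tendsto (fun n => ∫ ω, F n ω ∂μ) atTop (nhds (∫ ω, f (X ω) ∂μ)) :=
          tendsto_integral_of_dominated_convergence G hFmeas hGint hFbound hFlim
        refine le_of_tendsto hTend ?_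
        rw [eventually_atTop]
        refine ⟨⌈-a⌉₊ + 1, fun n hn => ?_⟩
        have hta : -(n:ℝ) < a := by
          have h1 : -a ≤ (⌈-a⌉₊ : ℝ) := Nat.le_ceil _
          have h2 : ((⌈-a⌉₊ + 1 : ℕ) : ℝ) ≤ (n:ℝ) := Nat.cast_le.mpr hn
          push_cast at h2
          linarith
        set t := -(n:ℝ) with ht
        obtain ⟨s, hs⟩ := exists_support_line f hfc t
        -- s < 0
        have hfa : f a - f t < 0 := by
          have h5 := hfc.slope_mono_adjacent (mem_univ t) (mem_univ b) hta haltb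
          rw [div_le_div_iff₀ (by linarith) (by linarith)] at h5
          nlinarith
        have hsneg : s ≤ 0 := by
          have := hs b
          nlinarith
        have hFint : Integrable (F n) μ := integrable_f_max hXm hcont hfX t
        have hphi : ∫ ω, X ω ∂μ ≤ ∫ ω, max (X ω) t ∂μ :=
          integral_mono hX (hX.sup (integrable_const t)) (fun ω => le_max_left _ _)
        have hkey := key_ineq μ ν X Y hXm hYm hX hY h f hfc t s hs hFint hfY2
        have hprod : s * ((∫ ω, max (X ω) t ∂μ) - ∫ ω, Y ω ∂ν) ≤ 0 :=
          mul_nonpos_of_nonpos_of_nonneg hsneg (by rw [← hEq]; linarith)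
        calc ∫ ω, F n ω ∂μ = ∫ ω, f (max (X ω) t) ∂μ := rfl
        _ ≤ ∫ ω, f (Y ω) ∂ν + s * ((∫ ω, max (X ω) t ∂μ) - ∫ ω, Y ω ∂ν) := hkey
        _ ≤ ∫ ω, f (Y ω) ∂ν := by linarith
  · -- strict inequality of means : find t* with E[max(X,t*)] = E[Y]
    have hφint : ∀ t : ℝ, Integrable (fun ω => max (X ω) t) μ := fun t =>
      hX.sup (integrable_const t)
    have hφcont : Continuous (fun t => ∫ ω, max (X ω) t ∂μ) := by
      apply LipschitzWith.continuous (K := 1)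
      apply LipschitzWith.of_dist_le_mul
      intro t t'
      rw [Real.dist_eq, Real.dist_eq, NNReal.coe_one, one_mul, ← integral_sub (hφint t) (hφint t')]
      calc |∫ ω, (max (X ω) t - max (X ω) t') ∂μ|
          ≤ ∫ ω, |max (X ω) t - max (X ω) t'| ∂μ := by
            simpa [Real.norm_eq_abs] using
              norm_integral_le_integral_norm (fun ω => max (X ω) t - max (X ω) t') (μ := μ)
        _ ≤ ∫ _ω, |t - t'| ∂μ := by
            refine integral_mono ((hφint t).sub (hφint t')).abs (integrable_const _) ?_
            intro ω
            show |X ω ⊔ t - X ω ⊔ t'| ≤ |t - t'|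
            rw [max_comm (X ω) t, max_comm (X ω) t']
            exact abs_max_sub_max_le_abs t t' (X ω)
        _ = |t - t'| := by simp
    have hφtend : Tendsto (fun n : ℕ => ∫ ω, max (X ω) (-(n:ℝ)) ∂μ) atTop
        (nhds (∫ ω, X ω ∂μ)) := by
      apply tendsto_integral_of_dominated_convergence (fun ω => |X ω|)
        (fun n => (hXm.max measurable_const).aestronglyMeasurable) hX.abs
      · intro n
        filter_upwards with ω
        simpa [Real.norm_eq_abs] using abs_max_neg_le (X ω) n
      · filter_upwards with ω
        apply tendsto_atTop_of_eventually_const (i₀ := ⌈-X ω⌉₊)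
        intro i hi
        have h1 : -X ω ≤ (i:ℝ) := le_trans (Nat.le_ceil _) (Nat.cast_le.mpr hi)
        rw [max_eq_left (by linarith)]
    obtain ⟨N, hN⟩ := (hφtend.eventually_lt_const hLt).exists
    set bb := max (∫ ω, Y ω ∂ν) (-(N:ℝ)) with hbb
    have hNbb : -(N:ℝ) ≤ bb := le_max_right _ _
    have hφbb : ∫ ω, Y ω ∂ν ≤ ∫ ω, max (X ω) bb ∂μ := by
      calc ∫ ω, Y ω ∂ν ≤ bb := le_max_left _ _
      _ = ∫ _ω, bb ∂μ := by simp
      _ ≤ ∫ ω, max (X ω) bb ∂μ :=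
          integral_mono (integrable_const bb) (hφint bb) (fun ω => le_max_right _ _)
    obtain ⟨tstar, _, htstar⟩ :=
      intermediate_value_Icc hNbb hφcont.continuousOn ⟨le_of_lt hN, hφbb⟩
    have htstar' : ∫ ω, max (X ω) tstar ∂μ = ∫ ω, Y ω ∂ν := htstar
    refine ⟨ℝ, inferInstance, μ.map X, fun x => max x tstar,
      Measure.isProbabilityMeasure_map hXm.aemeasurable,
      measurable_id.max measurable_const, ?_, ?_, ?_⟩
    · exact (integrable_map_measure
        (measurable_id.max measurable_const).aestronglyMeasurable
        hXm.aemeasurable).mpr (hφint tstar)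
    · intro f hf hfX' hfZ'
      rw [integral_map hXm.aemeasurable hfZ'.aestronglyMeasurable]
      have hfZμ : Integrable (fun ω => f (max (X ω) tstar)) μ := by
        simpa [Function.comp_def] using
          (integrable_map_measure hfZ'.aestronglyMeasurable hXm.aemeasurable).mp hfZ'
      exact integral_mono hfX' hfZμ (fun ω => hf (le_max_left _ _))
    · intro f hfc hfZ' hfY'
      rw [integral_map hXm.aemeasurable hfZ'.aestronglyMeasurable]
      have hfZμ : Integrable (fun ω => f (max (X ω) tstar)) μ := by
        simpa [Function.comp_def] using
          (integrable_map_measure hfZ'.aestronglyMeasurable hXm.aemeasurable).mp hfZ'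
      obtain ⟨s, hs⟩ := exists_support_line f hfc tstar
      have hkey := key_ineq μ ν X Y hXm hYm hX hY h f hfc tstar s hs hfZμ hfY'
      have hzero : (∫ ω, max (X ω) tstar ∂μ) - ∫ ω, Y ω ∂ν = 0 := by
        rw [htstar']; ring
      rw [hzero, mul_zero, add_zero] at hkey
      exact hkey
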